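/- Every orthogonal projection P ∈ D+K admits a decomposition P = E + K where E is a diagonal orthogonal projection (a diagonal operator with entries in {0,1}) and K is compact. -/

import Mathlib

open scoped InnerProductSpace
open ContinuousLinearMap

variable {H : Type*} [NormedAddCommGroup H] [InnerProductSpace ℂ H] [CompleteSpace H]

/-- An operator is diagonal with respect to the fixed orthonormal (Hilbert) basis `e`. -/
def IsDiagonal (e : HilbertBasis ℕ ℂ H) (T : H →L[ℂ] H) : Prop :=
  ∀ n m : ℕ, n ≠ m → ⟪e m, T (e n)⟫_ℂ = 0

/-- The set `D + K` of sums of a diagonal operator and a compact operator. -/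
def DplusK (e : HilbertBasis ℕ ℂ H) : Set (H →L[ℂ] H) :=
  {T | ∃ D K : H →L[ℂ] H, IsDiagonal e D ∧ IsCompactOperator ⇑K ∧ T = D + K}

section Auxiliary

open Filter Topology
open scoped ENNReal

set_option linter.unusedSectionVars false

theorem DK_inner_basis_tendsto_zero (e : HilbertBasis ℕ ℂ H) (w : H) :
    Tendsto (fun n => ⟪w, e n⟫_ℂ) atTop (𝓝 0) := by
  have hs : Summable fun n => ‖e.repr w n‖ ^ (2 : ℝ) := by
    have := lp.memℓp (e.repr w)
    have h2 : (0:ℝ) < (2 : ℝ≥0∞).toReal := by norm_num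
    simpa using this.summable h2
  have h0 : Tendsto (fun n => ‖e.repr w n‖ ^ (2:ℝ)) atTop (𝓝 0) := hs.tendsto_atTop_zero
  have h1 : Tendsto (fun n => ‖e.repr w n‖) atTop (𝓝 0) := by
    have := h0.sqrt
    simp only [Real.sqrt_zero] at this
    convert this using 2 with n
    rw [show ((2:ℝ)) = ((2:ℕ):ℝ) by norm_num, Real.rpow_natCast, Real.sqrt_sq (norm_nonneg _)]
  rw [tendsto_zero_iff_norm_tendsto_zero]
  convert h1 using 2 with n
  rw [e.repr_apply_apply, ← inner_conj_symm, RCLike.norm_conj]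

theorem DK_compact_apply_basis_tendsto_zero (e : HilbertBasis ℕ ℂ H) (K : H →L[ℂ] H)
    (hK : IsCompactOperator ⇑K) : Tendsto (fun n => K (e n)) atTop (𝓝 0) := by
  apply tendsto_of_subseq_tendsto
  intro ns hns
  have hC : IsCompact (closure (⇑K '' Metric.closedBall 0 1)) :=
    hK.isCompact_closure_image_closedBall 1
  have hmem : ∀ i, K (e (ns i)) ∈ closure (⇑K '' Metric.closedBall 0 1) := by
    intro i
    apply subset_closure
    exact ⟨e (ns i), by simp [e.orthonormal.1 (ns i)], rfl⟩
  obtain ⟨y, hy, φ, hφ, hlim⟩ := hC.tendsto_subseq hmem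
  have hy0 : y = 0 := by
    have hall : ∀ v : H, ⟪v, y⟫_ℂ = 0 := by
      intro v
      have h1 : Tendsto (fun i => ⟪v, K (e (ns (φ i)))⟫_ℂ) atTop (𝓝 ⟪v, y⟫_ℂ) :=
        (((@innerSL ℂ H _ _) v).continuous.tendsto y).comp hlim
      have h2 : Tendsto (fun n => ⟪v, K (e n)⟫_ℂ) atTop (𝓝 0) := by
        have := DK_inner_basis_tendsto_zero e ((ContinuousLinearMap.adjoint K) v)
        convert this using 2 with n
        rw [ContinuousLinearMap.adjoint_inner_left]
      exact tendsto_nhds_unique h1 (h2.comp (hns.comp hφ.tendsto_atTop))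
    simpa using hall y
  exact ⟨φ, hy0 ▸ hlim⟩

theorem DK_mul_rpow_le {c : ℕ → ℂ} {C : ℝ} (hC : ∀ n, ‖c n‖ ≤ C) (f : lp (fun _ : ℕ => ℂ) 2)
    (n : ℕ) : ‖c n * f n‖ ^ (2:ℝ≥0∞).toReal ≤ C ^ (2:ℝ≥0∞).toReal * ‖f n‖ ^ (2:ℝ≥0∞).toReal := by
  rw [norm_mul, Real.mul_rpow (norm_nonneg _) (norm_nonneg _)]
  have : ‖c n‖ ^ (2:ℝ≥0∞).toReal ≤ C ^ (2:ℝ≥0∞).toReal :=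
    Real.rpow_le_rpow (norm_nonneg _) (hC n) (by norm_num)
  exact mul_le_mul_of_nonneg_right this (Real.rpow_nonneg (norm_nonneg _) _)

theorem DK_memmul {c : ℕ → ℂ} {C : ℝ} (hC : ∀ n, ‖c n‖ ≤ C) (f : lp (fun _ : ℕ => ℂ) 2) :
    Memℓp (fun n => c n * f n) 2 := by
  have h2 : (0:ℝ) < (2 : ℝ≥0∞).toReal := by norm_num
  exact memℓp_gen <| (((lp.memℓp f).summable h2).mul_left _).of_nonneg_of_le
    (fun n => by positivity) (DK_mul_rpow_le hC f)

theorem DK_normmul {c : ℕ → ℂ} {C : ℝ} (hC : ∀ n, ‖c n‖ ≤ C) (f : lp (fun _ : ℕ => ℂ) 2) :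
    ‖(⟨fun n => c n * f n, DK_memmul hC f⟩ : lp (fun _ : ℕ => ℂ) 2)‖ ≤ C * ‖f‖ := by
  have h2 : (0:ℝ) < (2 : ℝ≥0∞).toReal := by norm_num
  have hC0 : 0 ≤ C := (norm_nonneg _).trans (hC 0)
  apply lp.norm_le_of_tsum_le h2 (by positivity)
  have key : ∑' n, ‖c n * f n‖ ^ (2:ℝ≥0∞).toReal ≤
      C ^ (2:ℝ≥0∞).toReal * ∑' n, ‖f n‖ ^ (2:ℝ≥0∞).toReal := by
    rw [← tsum_mul_left]
    exact Summable.tsum_le_tsum (DK_mul_rpow_le hC f) ((DK_memmul hC f).summable h2)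
      (((lp.memℓp f).summable h2).mul_left _)
  refine le_trans (by exact key) ?_
  rw [Real.mul_rpow hC0 (norm_nonneg _), lp.norm_rpow_eq_tsum h2 f]

/-- The multiplication operator on ℓ². -/
noncomputable def DKmulCLM (c : ℕ → ℂ) {C : ℝ} (hC : ∀ n, ‖c n‖ ≤ C) :
    lp (fun _ : ℕ => ℂ) 2 →L[ℂ] lp (fun _ : ℕ => ℂ) 2 :=
  LinearMap.mkContinuous
    { toFun := fun f => ⟨fun n => c n * f n, DK_memmul hC f⟩
      map_add' := fun f g => by ext n; simp [mul_add]; rfl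
      map_smul' := fun a f => by ext n; simp [lp.coeFn_smul]; ring }
    C (fun f => DK_normmul hC f)

theorem DKmulCLM_apply (c : ℕ → ℂ) {C : ℝ} (hC : ∀ n, ‖c n‖ ≤ C) (f : lp (fun _ : ℕ => ℂ) 2)
    (n : ℕ) : DKmulCLM c hC f n = c n * f n := rfl

/-- Diagonal operator on `H` with entries `c`. -/
noncomputable def DKdiagOp (e : HilbertBasis ℕ ℂ H) (c : ℕ → ℂ) {C : ℝ} (hC : ∀ n, ‖c n‖ ≤ C) :
    H →L[ℂ] H :=
  ((e.repr.symm.toContinuousLinearEquiv : lp (fun _ : ℕ => ℂ) 2 →L[ℂ] H).comp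
    (DKmulCLM c hC)).comp (e.repr.toContinuousLinearEquiv : H →L[ℂ] lp (fun _ : ℕ => ℂ) 2)

theorem DKdiagOp_apply_basis (e : HilbertBasis ℕ ℂ H) (c : ℕ → ℂ) {C : ℝ} (hC : ∀ n, ‖c n‖ ≤ C)
    (n : ℕ) : DKdiagOp e c hC (e n) = c n • e n := by
  classical
  have h1 : DKmulCLM c hC (e.repr (e n)) = c n • e.repr (e n) := by
    ext m
    rw [DKmulCLM_apply, e.repr_self, lp.coeFn_smul, Pi.smul_apply]
    by_cases h : m = n
    · subst h; simp [lp.single_apply]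
    · simp [lp.single_apply, h]
  show e.repr.symm (DKmulCLM c hC (e.repr (e n))) = c n • e n
  rw [h1, map_smul, e.repr.symm_apply_apply]

theorem DKdiagOp_norm_apply_le (e : HilbertBasis ℕ ℂ H) (c : ℕ → ℂ) {C : ℝ}
    (hC : ∀ n, ‖c n‖ ≤ C) (x : H) : ‖DKdiagOp e c hC x‖ ≤ C * ‖x‖ := by
  show ‖e.repr.symm (DKmulCLM c hC (e.repr x))‖ ≤ C * ‖x‖
  rw [e.repr.symm.norm_map, ← e.repr.norm_map x]
  exact DK_normmul hC (e.repr x)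

/-- Any operator mapping each `e n` to `c n • e n` equals `DKdiagOp e c`. -/
theorem DK_eq_diagOp (e : HilbertBasis ℕ ℂ H) (c : ℕ → ℂ) {C : ℝ} (hC : ∀ n, ‖c n‖ ≤ C)
    (T : H →L[ℂ] H) (hT : ∀ n, T (e n) = c n • e n) : T = DKdiagOp e c hC := by
  have hd : Dense ((Submodule.span ℂ (Set.range ⇑e) : Submodule ℂ H) : Set H) :=
    Submodule.dense_iff_topologicalClosure_eq_top.mpr e.dense_span
  apply ContinuousLinearMap.ext_on hd
  rintro x ⟨n, rfl⟩
  rw [hT n, DKdiagOp_apply_basis]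

theorem DK_rankOne_compact (v w : H) :
    IsCompactOperator ⇑((innerSL ℂ v).smulRight w) := by
  refine ⟨(fun t : ℂ => t • w) '' Metric.closedBall 0 ‖v‖, ?_, ?_⟩
  · exact (isCompact_closedBall 0 ‖v‖).image (continuous_id.smul continuous_const)
  · filter_upwards [Metric.closedBall_mem_nhds (0:H) one_pos] with x hx
    refine ⟨⟪v, x⟫_ℂ, ?_, rfl⟩
    simp only [Metric.mem_closedBall, dist_zero_right]
    calc ‖⟪v, x⟫_ℂ‖ ≤ ‖v‖ * ‖x‖ := norm_inner_le_norm v x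
    _ ≤ ‖v‖ * 1 := by
        have : ‖x‖ ≤ 1 := by simpa [dist_zero_right] using hx
        exact mul_le_mul_of_nonneg_left this (norm_nonneg v)
    _ = ‖v‖ := mul_one _

theorem DK_clm_sum_compact {s : Finset ℕ} {T : ℕ → H →L[ℂ] H}
    (hT : ∀ n ∈ s, IsCompactOperator ⇑(T n)) :
    IsCompactOperator ⇑(∑ n ∈ s, T n) := by
  classical
  induction s using Finset.induction_on with
  | empty => simpa using isCompactOperator_zero
  | insert _ _ hx ih =>
    rename_i a s
    rw [Finset.sum_insert hx]
    have : ⇑(T a + ∑ n ∈ s, T n) = ⇑(T a) + ⇑(∑ n ∈ s, T n) := rfl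
    rw [this]
    exact (hT a (Finset.mem_insert_self a s)).add
      (ih fun n hn => hT n (Finset.mem_insert_of_mem hn))

/-- A diagonal operator whose entries tend to zero is compact. -/
theorem DK_diag_compact (e : HilbertBasis ℕ ℂ H) (c : ℕ → ℂ)
    (hc : Tendsto c atTop (𝓝 0)) (T : H →L[ℂ] H) (hT : ∀ n, T (e n) = c n • e n) :
    IsCompactOperator ⇑T := by
  classical
  set F : ℕ → H →L[ℂ] H := fun N => ∑ n ∈ Finset.range N, c n • (innerSL ℂ (e n)).smulRight (e n)
    with hF
  have hFapp : ∀ N m, F N (e m) = (if m < N then c m else 0) • e m := by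
    intro N m
    rw [hF]
    simp only [ContinuousLinearMap.sum_apply, ContinuousLinearMap.smul_apply,
      ContinuousLinearMap.smulRight_apply, innerSL_apply_apply]
    have horth := e.orthonormal
    rw [orthonormal_iff_ite] at horth
    by_cases h : m < N
    · rw [Finset.sum_eq_single m]
      · rw [horth m m]; simp [h]
      · intro b _ hb; rw [horth b m, if_neg hb]; simp
      · intro hm; exact absurd (Finset.mem_range.mpr h) hm
    · rw [if_neg h, zero_smul, Finset.sum_eq_zero]
      intro b hb
      have hbm : b ≠ m := fun hbm => h (hbm ▸ Finset.mem_range.mp hb)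
      rw [horth b m, if_neg hbm]; simp
  have hFc : ∀ N, IsCompactOperator ⇑(F N) := by
    intro N
    exact DK_clm_sum_compact fun n _ => (DK_rankOne_compact (e n) (e n)).smul (c n)
  have hlim : Tendsto F atTop (𝓝 T) := by
    rw [Metric.tendsto_atTop]
    intro ε hε
    rw [Metric.tendsto_atTop] at hc
    obtain ⟨N0, hN0⟩ := hc (ε/2) (half_pos hε)
    refine ⟨N0, fun N hN => ?_⟩
    rw [dist_eq_norm]
    have hCd : ∀ n, ‖(c n - if n < N then c n else 0)‖ ≤ ε/2 := by
      intro n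
      by_cases h : n < N
      · simp [h]; positivity
      · rw [if_neg h, sub_zero]
        have : N0 ≤ n := le_trans hN (not_lt.mp h)
        simpa [dist_zero_right] using (hN0 n this).le
    have heq : F N - T = DKdiagOp e (fun n => (if n < N then c n else 0) - c n)
        (C := ε/2) (fun n => by rw [norm_sub_rev]; exact hCd n) := by
      apply DK_eq_diagOp
      intro n
      rw [ContinuousLinearMap.sub_apply, hFapp, hT, ← sub_smul]
    have : ‖F N - T‖ ≤ ε/2 := by
      apply ContinuousLinearMap.opNorm_le_bound _ (by positivity)
      intro x
      rw [heq]
      exact DKdiagOp_norm_apply_le e _ _ x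
    calc ‖F N - T‖ ≤ ε/2 := this
    _ < ε := half_lt_self hε
  exact isCompactOperator_of_tendsto hlim (Eventually.of_forall hFc)

/-- Closed span of a subfamily of the basis. -/
noncomputable def DKbasisSpan (e : HilbertBasis ℕ ℂ H) (S : Set ℕ) : Submodule ℂ H :=
  (Submodule.span ℂ (⇑e '' S)).topologicalClosure

instance (e : HilbertBasis ℕ ℂ H) (S : Set ℕ) : CompleteSpace (DKbasisSpan e S) :=
  (Submodule.isClosed_topologicalClosure _).completeSpace_coe

/-- Diagonal projection associated to a subset of indices. -/
noncomputable def DKdiagProj (e : HilbertBasis ℕ ℂ H) (S : Set ℕ) : H →L[ℂ] H :=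
  (DKbasisSpan e S).subtypeL.comp (Submodule.orthogonalProjection (DKbasisSpan e S))

theorem DKdiagProj_isSelfAdjoint (e : HilbertBasis ℕ ℂ H) (S : Set ℕ) :
    IsSelfAdjoint (DKdiagProj e S) :=
  isSelfAdjoint_starProjection _

theorem DKdiagProj_isIdempotent (e : HilbertBasis ℕ ℂ H) (S : Set ℕ) :
    IsIdempotentElem (DKdiagProj e S) := by
  rw [IsIdempotentElem]
  ext x
  show (DKbasisSpan e S).subtypeL (Submodule.orthogonalProjection (DKbasisSpan e S)
    ((Submodule.orthogonalProjection (DKbasisSpan e S) x : H))) = (DKdiagProj e S) x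
  rw [Submodule.orthogonalProjection_mem_subspace_eq_self]
  rfl

theorem DKdiagProj_apply_mem (e : HilbertBasis ℕ ℂ H) (S : Set ℕ) {n : ℕ} (hn : n ∈ S) :
    DKdiagProj e S (e n) = e n := by
  have hmem : e n ∈ DKbasisSpan e S :=
    Submodule.le_topologicalClosure _ (Submodule.subset_span ⟨n, hn, rfl⟩)
  show ((Submodule.orthogonalProjection (DKbasisSpan e S) (e n)) : H) = e n
  exact Submodule.starProjection_eq_self_iff.mpr hmem

theorem DKdiagProj_apply_not_mem (e : HilbertBasis ℕ ℂ H) (S : Set ℕ) {n : ℕ} (hn : n ∉ S) :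
    DKdiagProj e S (e n) = 0 := by
  have horth : e n ∈ (DKbasisSpan e S)ᗮ := by
    rw [Submodule.mem_orthogonal]
    intro u hu
    have hker : DKbasisSpan e S ≤ LinearMap.ker ((innerSL ℂ (e n) : H →L[ℂ] ℂ) : H →ₗ[ℂ] ℂ) := by
      apply Submodule.topologicalClosure_minimal
      · rw [Submodule.span_le]
        rintro _ ⟨m, hm, rfl⟩
        have horth := e.orthonormal
        rw [orthonormal_iff_ite] at horth
        simp only [SetLike.mem_coe, LinearMap.mem_ker, ContinuousLinearMap.coe_coe, innerSL_apply_apply]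
        rw [horth n m, if_neg]
        rintro rfl; exact hn hm
      · exact ContinuousLinearMap.isClosed_ker (innerSL ℂ (e n))
    have h0 := hker hu
    rw [LinearMap.mem_ker] at h0
    have h0' : ⟪e n, u⟫_ℂ = 0 := by simpa using h0
    rw [← inner_conj_symm, h0', map_zero]
  show ((Submodule.orthogonalProjection (DKbasisSpan e S) (e n)) : H) = 0
  rw [Submodule.orthogonalProjectionOnto_apply_of_mem_orthogonal horth]
  rfl

theorem DK_diagonal_apply (e : HilbertBasis ℕ ℂ H) (D : H →L[ℂ] H)
    (hD : IsDiagonal e D) (n : ℕ) : D (e n) = ⟪e n, D (e n)⟫_ℂ • e n := by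
  apply e.repr.injective
  apply lp.ext
  funext m
  rw [e.repr_apply_apply, e.repr_apply_apply]
  have horth := e.orthonormal
  rw [orthonormal_iff_ite] at horth
  rw [inner_smul_right, horth m n]
  by_cases h : m = n
  · subst h; simp
  · rw [if_neg h, mul_zero]
    exact hD n m (fun hh => h hh.symm)

end Auxiliary

/-- Every orthogonal projection `P ∈ D+K` decomposes as `P = E + K` with `E` a diagonal
orthogonal projection (diagonal entries in `{0,1}`) and `K` compact. -/
theorem projection_decomposition (e : HilbertBasis ℕ ℂ H)
    (P : H →L[ℂ] H) (hP : P ∈ DplusK e)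
    (hPsa : IsSelfAdjoint P) (hPidem : IsIdempotentElem P) :
    ∃ E K : H →L[ℂ] H, IsDiagonal e E ∧ IsSelfAdjoint E ∧ IsIdempotentElem E ∧
      (∀ n : ℕ, E (e n) = e n ∨ E (e n) = 0) ∧
      IsCompactOperator ⇑K ∧ P = E + K := by
  classical
  open Filter Topology in
  obtain ⟨D, K', hD, hK', hPDK⟩ := hP
  set d : ℕ → ℂ := fun n => ⟪e n, D (e n)⟫_ℂ with hd
  have hDe : ∀ n, D (e n) = d n • e n := fun n => DK_diagonal_apply e D hD n
  have hnorm1 : ∀ n, ‖e n‖ = 1 := e.orthonormal.1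
  have hKe : Tendsto (fun n => K' (e n)) atTop (𝓝 0) :=
    DK_compact_apply_basis_tendsto_zero e K' hK'
  -- the key algebraic identity from idempotency
  have key : ∀ n, (d n - d n * d n) • e n = d n • K' (e n) + P (K' (e n)) - K' (e n) := by
    intro n
    have hPe : P (e n) = d n • e n + K' (e n) := by
      rw [hPDK, ContinuousLinearMap.add_apply, hDe n]
    have h2 : P (P (e n)) = P (e n) := by
      have := congrArg (fun T : H →L[ℂ] H => T (e n)) hPidem
      simpa [ContinuousLinearMap.mul_apply] using this
    rw [hPe, map_add, map_smul, hPe] at h2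
    linear_combination (norm := module) -h2
  -- the diagonal entries accumulate at {0,1}
  have ht : Tendsto (fun n => ‖d n - d n * d n‖) atTop (𝓝 0) := by
    have hband : ∀ n, ‖d n‖ ≤ ‖D‖ := by
      intro n
      have h1 : ‖D (e n)‖ ≤ ‖D‖ := by simpa [hnorm1 n] using D.le_opNorm (e n)
      rw [hDe n, norm_smul, hnorm1 n, mul_one] at h1
      exact h1
    have hb : ∀ n, ‖d n - d n * d n‖ ≤ (‖D‖ + ‖P‖ + 1) * ‖K' (e n)‖ := by
      intro n
      have h1 : ‖d n - d n * d n‖ = ‖(d n - d n * d n) • e n‖ := by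
        rw [norm_smul, hnorm1 n, mul_one]
      rw [h1, key n]
      calc ‖d n • K' (e n) + P (K' (e n)) - K' (e n)‖
          ≤ ‖d n • K' (e n) + P (K' (e n))‖ + ‖K' (e n)‖ := norm_sub_le _ _
        _ ≤ ‖d n • K' (e n)‖ + ‖P (K' (e n))‖ + ‖K' (e n)‖ := by
            gcongr; exact norm_add_le _ _
        _ ≤ ‖D‖ * ‖K' (e n)‖ + ‖P‖ * ‖K' (e n)‖ + 1 * ‖K' (e n)‖ := by
            gcongr
            · rw [norm_smul]; gcongr; exact hband n
            · exact P.le_opNorm _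
            · rw [one_mul]
        _ = (‖D‖ + ‖P‖ + 1) * ‖K' (e n)‖ := by ring
    have hlim0 : Tendsto (fun n => (‖D‖ + ‖P‖ + 1) * ‖K' (e n)‖) atTop (𝓝 0) := by
      have := (hKe.norm).const_mul (‖D‖ + ‖P‖ + 1)
      simpa using this
    exact squeeze_zero (fun n => norm_nonneg _) hb hlim0
  -- round the entries to {0,1}
  set S : Set ℕ := {n | ¬ ‖d n‖ ≤ ‖d n - 1‖} with hS
  set ε : ℕ → ℂ := fun n => if n ∈ S then 1 else 0 with hε
  set c : ℕ → ℂ := fun n => d n - ε n with hc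
  have hcn : ∀ n, ‖c n‖ ^ 2 ≤ ‖d n - d n * d n‖ := by
    intro n
    have hprod : ‖d n - d n * d n‖ = ‖d n‖ * ‖d n - 1‖ := by
      rw [show d n - d n * d n = d n * (1 - d n) by ring, norm_mul, norm_sub_rev]
    rw [hprod]
    by_cases h : n ∈ S
    · have hlt : ‖d n - 1‖ ≤ ‖d n‖ := le_of_not_ge h
      have : ‖c n‖ = ‖d n - 1‖ := by rw [hc]; simp [hε, if_pos h]
      rw [this, sq]
      exact mul_le_mul_of_nonneg_right hlt (norm_nonneg _)
    · have hle : ‖d n‖ ≤ ‖d n - 1‖ := not_not.mp (fun hh => h hh)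
      have : ‖c n‖ = ‖d n‖ := by rw [hc]; simp [hε, if_neg h]
      rw [this, sq]
      exact mul_le_mul_of_nonneg_left hle (norm_nonneg _)
  have hctend : Tendsto c atTop (𝓝 0) := by
    rw [tendsto_zero_iff_norm_tendsto_zero]
    have hsqrt : Tendsto (fun n => Real.sqrt ‖d n - d n * d n‖) atTop (𝓝 0) := by
      have := ht.sqrt
      simpa using this
    apply squeeze_zero (fun n => norm_nonneg _) _ hsqrt
    intro n
    rw [Real.le_sqrt (norm_nonneg _) (norm_nonneg _)]
    exact hcn n
  -- the candidate diagonal projection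
  set E : H →L[ℂ] H := DKdiagProj e S with hE
  have hEe : ∀ n, E (e n) = (ε n) • e n := by
    intro n
    by_cases h : n ∈ S
    · rw [hE, DKdiagProj_apply_mem e S h, hε]; simp [if_pos h]
    · rw [hE, DKdiagProj_apply_not_mem e S h, hε]; simp [if_neg h]
  refine ⟨E, P - E, ?_, DKdiagProj_isSelfAdjoint e S, DKdiagProj_isIdempotent e S, ?_, ?_, by abel⟩
  · -- E is diagonal
    intro n m hnm
    rw [hEe n, inner_smul_right]
    have horth := e.orthonormal
    rw [orthonormal_iff_ite] at horth
    rw [horth m n, if_neg (fun h => hnm h.symm), mul_zero]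
  · -- entries in {0,1}
    intro n
    by_cases h : n ∈ S
    · left; rw [hE]; exact DKdiagProj_apply_mem e S h
    · right; rw [hE]; exact DKdiagProj_apply_not_mem e S h
  · -- compactness of P - E
    have hDE : ∀ n, (D - E) (e n) = c n • e n := by
      intro n
      rw [ContinuousLinearMap.sub_apply, hDe n, hEe n, hc, sub_smul]
    have hDEc : IsCompactOperator ⇑(D - E) := DK_diag_compact e c hctend (D - E) hDE
    have hsplit : P - E = (D - E) + K' := by rw [hPDK]; abel
    rw [hsplit]
    have : ⇑((D - E) + K') = ⇑(D - E) + ⇑K' := rfl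
    rw [this]
    exact hDEc.add hK'
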